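/- Let μ be a probability distribution on a space X partitioned into sets R₁,…,R_k, let m₁,…,m_k ≥ 0 with m = max_i mᵢ ≥ (k/ε)·ln(2k/δ), and let X be a sample of M = (2k/ε)·m i.i.d. draws from μ. Let A = {i : #(X ∩ Rᵢ) < mᵢ}. Then with probability at least 1−δ, Σ_{i∈A} μ(Rᵢ) < ε. -/

import Mathlib

open Real MeasureTheory ProbabilityTheory


lemma bern_mgf_le (p : ℝ) (hp0 : 0 ≤ p) (hp1 : p ≤ 1) {t : ℝ} (ht : t ≤ 0) :
    1 + p * (Real.exp t - 1) ≤ Real.exp (p * t + t ^ 2 / 8) := by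
  have hD : ∀ x : ℝ, 0 < 1 - p + p * Real.exp x := by
    intro x
    have h1 := Real.exp_pos x
    nlinarith [mul_nonneg hp0 h1.le]
  set g : ℝ → ℝ := fun x => p * x + x ^ 2 / 8 - Real.log (1 - p + p * Real.exp x) with hgdef
  set h : ℝ → ℝ := fun x => p + x / 4 - p * Real.exp x / (1 - p + p * Real.exp x) with hhdef
  have hDd : ∀ x : ℝ, HasDerivAt (fun y : ℝ => 1 - p + p * Real.exp y) (p * Real.exp x) x := by
    intro x
    simpa using ((Real.hasDerivAt_exp x).const_mul p).const_add (1 - p)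
  have hg : ∀ x : ℝ, HasDerivAt g (h x) x := by
    intro x
    have h1 : HasDerivAt (fun y : ℝ => p * y + y ^ 2 / 8) (p + 2 * x / 8) x := by
      have := ((hasDerivAt_id x).const_mul p).add ((hasDerivAt_pow 2 x).div_const 8)
      exact (by simpa using this : HasDerivAt ((fun y : ℝ => p * y) + fun y => y ^ 2 / 8) (p + 2 * x / 8) x)
    have h2 := ((hDd x).log (ne_of_gt (hD x)))
    have := h1.sub h2
    refine this.congr_deriv ?_
    simp [hhdef]
    ring
  have hh : ∀ x : ℝ, HasDerivAt h
      (0 + 1 / 4 - (p * Real.exp x * (1 - p + p * Real.exp x) -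
        p * Real.exp x * (p * Real.exp x)) / (1 - p + p * Real.exp x) ^ 2) x := by
    intro x
    have h1 : HasDerivAt (fun y : ℝ => p + y / 4) (0 + 1 / 4) x := by
      exact (hasDerivAt_const x p).add ((hasDerivAt_id x).div_const 4)
    have h2 := ((Real.hasDerivAt_exp x).const_mul p).div (hDd x) (ne_of_gt (hD x))
    exact h1.sub h2
  have hmono : Monotone h := by
    apply monotone_of_deriv_nonneg (fun x => (hh x).differentiableAt)
    intro x
    rw [(hh x).deriv]
    set a := p * Real.exp x with ha
    have ha0 : 0 ≤ a := mul_nonneg hp0 (Real.exp_pos x).le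
    have hb0 : 0 ≤ 1 - p := by linarith
    have hd := hD x
    rw [sub_nonneg, div_le_iff₀ (by positivity)]
    nlinarith [sq_nonneg (a - (1 - p))]
  have h0 : h 0 = 0 := by
    simp [hhdef]
  have hht : h t ≤ 0 := h0 ▸ hmono ht
  have hanti : AntitoneOn g (Set.Iic 0) := by
    apply antitoneOn_of_deriv_nonpos (convex_Iic 0)
    · exact (fun x _ => ((hg x).differentiableAt.continuousAt.continuousWithinAt))
    · exact fun x _ => (hg x).differentiableAt.differentiableWithinAt
    · intro x hx
      rw [(hg x).deriv]
      have hx' : x ≤ 0 := le_of_lt (by simpa using hx)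
      exact h0 ▸ hmono hx'
  have hg0 : g 0 = 0 := by simp [hgdef]
  have := hanti (Set.mem_Iic.mpr ht) (Set.mem_Iic.mpr le_rfl) ht
  rw [hg0] at this
  have hlog : Real.log (1 - p + p * Real.exp t) ≤ p * t + t ^ 2 / 8 := by
    simp only [hgdef] at this
    linarith
  calc 1 + p * (Real.exp t - 1) = 1 - p + p * Real.exp t := by ring
    _ ≤ Real.exp (p * t + t ^ 2 / 8) := by
        rw [← Real.exp_log (hD t)]
        exact Real.exp_le_exp.mpr hlog

lemma count_tail {E : Type*} [MeasureSpace E] [IsProbabilityMeasure (volume : Measure E)]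
    (A : Set E) (hA : MeasurableSet A) (M : ℕ) (hMpos : 0 < M) (m : ℝ)
    (hm : m ≤ (M : ℝ) * ((volume : Measure E) A).toReal) :
    (volume : Measure (Fin M → E))
        {ω | (∑ j, A.indicator (fun _ => (1:ℝ)) (ω j)) ≤ m}
      ≤ ENNReal.ofReal
          (Real.exp (-2 * ((M : ℝ) * ((volume : Measure E) A).toReal - m) ^ 2 / M)) := by
  set p : ℝ := ((volume : Measure E) A).toReal with hp
  have hp0 : 0 ≤ p := ENNReal.toReal_nonneg
  have hp1 : p ≤ 1 := by
    have h1 : (volume : Measure E) A ≤ 1 := prob_le_one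
    simpa using ENNReal.toReal_mono ENNReal.one_ne_top h1
  have hM0 : ((M : ℝ)) ≠ 0 := Nat.cast_ne_zero.mpr hMpos.ne'
  have hMpos' : (0:ℝ) < M := by positivity
  set s : ℝ := (M : ℝ) * p - m with hs
  have hs0 : 0 ≤ s := by simp [hs]; linarith
  set t : ℝ := -4 * s / M with htdef
  have ht : t ≤ 0 := by
    rw [htdef]
    apply div_nonpos_of_nonpos_of_nonneg <;> linarith
  set S : (Fin M → E) → ℝ := fun ω => ∑ j, A.indicator (fun _ => (1:ℝ)) (ω j) with hS
  have hSmeas : Measurable S := by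
    apply Finset.measurable_sum
    intro j _
    exact (measurable_const.indicator hA).comp (measurable_pi_apply j)
  have hSnonneg : ∀ ω, 0 ≤ S ω := by
    intro ω
    apply Finset.sum_nonneg
    intro j _
    exact Set.indicator_nonneg (fun _ _ => zero_le_one) _
  have hint : Integrable (fun ω => Real.exp (t * S ω)) (volume : Measure (Fin M → E)) := by
    apply Integrable.mono' (integrable_const (1:ℝ))
      (hSmeas.const_mul t).exp.aestronglyMeasurable
    apply ae_of_all
    intro ω
    rw [Real.norm_eq_abs, abs_of_pos (Real.exp_pos _)]
    exact Real.exp_le_one_iff.mpr (mul_nonpos_of_nonpos_of_nonneg ht (hSnonneg ω))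
  -- one-coordinate integral
  have hone : (∫ x, Real.exp (t * A.indicator (fun _ => (1:ℝ)) x)) = 1 + p * (Real.exp t - 1) := by
    have heq : (fun x => Real.exp (t * A.indicator (fun _ => (1:ℝ)) x))
        = fun x => A.indicator (fun _ => Real.exp t - 1) x + 1 := by
      funext x
      by_cases hx : x ∈ A <;>
        simp [Set.indicator_of_mem, Set.indicator_of_notMem, hx]
    rw [heq, integral_add ((integrable_const _).indicator hA) (integrable_const 1),
      integral_indicator_const _ hA, integral_const]
    simp [smul_eq_mul, measureReal_def]
    rw [← hp]
    ring
  have hmgf : mgf S (volume : Measure (Fin M → E)) t = (1 + p * (Real.exp t - 1)) ^ M := by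
    rw [mgf, ← hone]
    have : (fun ω : Fin M → E => Real.exp (t * S ω))
        = fun ω : Fin M → E => ∏ j, Real.exp (t * A.indicator (fun _ => (1:ℝ)) (ω j)) := by
      funext ω
      rw [hS, Finset.mul_sum, Real.exp_sum]
    rw [this]
    have := MeasureTheory.integral_fintype_prod_eq_pow (ι := Fin M) (μ := (volume : Measure E))
      (fun x : E => Real.exp (t * A.indicator (fun _ => (1:ℝ)) x))
    rw [Fintype.card_fin] at this
    exact this
  have key := measure_le_le_exp_mul_mgf (μ := (volume : Measure (Fin M → E))) (X := S) m ht hint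
  rw [hmgf] at key
  have hchain : Real.exp (-t * m) * (1 + p * (Real.exp t - 1)) ^ M
      ≤ Real.exp (-2 * s ^ 2 / M) := by
    have hD0 : 0 ≤ 1 + p * (Real.exp t - 1) := by
      nlinarith [Real.exp_pos t, mul_nonneg hp0 (Real.exp_pos t).le]
    calc Real.exp (-t * m) * (1 + p * (Real.exp t - 1)) ^ M
        ≤ Real.exp (-t * m) * (Real.exp (p * t + t ^ 2 / 8)) ^ M := by
          apply mul_le_mul_of_nonneg_left _ (Real.exp_pos _).le
          exact pow_le_pow_left₀ hD0 (bern_mgf_le p hp0 hp1 ht) M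
      _ = Real.exp (-t * m + M * (p * t + t ^ 2 / 8)) := by
          rw [← Real.exp_nat_mul, ← Real.exp_add]
      _ = Real.exp (-2 * s ^ 2 / M) := by
          congr 1
          rw [htdef, hs]
          field_simp
          ring
  have hfin : (volume : Measure (Fin M → E)) {ω | S ω ≤ m} ≠ ⊤ := measure_ne_top _ _
  rw [ENNReal.le_ofReal_iff_toReal_le hfin (Real.exp_pos _).le]
  exact key.trans hchain

open scoped Classical


theorem stmt_19 {X : Type*} [MeasurableSpace X] (μ : Measure X) [IsProbabilityMeasure μ]
    (k : ℕ) (hk : 0 < k) (R : Fin k → Set X)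
    (hmeas : ∀ i, MeasurableSet (R i))
    (hdisj : Pairwise (Function.onFun Disjoint R))
    (hcover : ⋃ i, R i = Set.univ)
    (mi : Fin k → ℝ) (hmi : ∀ i, 0 ≤ mi i)
    (mmax : ℝ) (hub : ∀ i, mi i ≤ mmax) (hex : ∃ i, mi i = mmax)
    (ε δ : ℝ) (hε : ε ∈ Set.Ioo (0 : ℝ) 1) (hδ : δ ∈ Set.Ioo (0 : ℝ) 1)
    (hbig : (k : ℝ) / ε * Real.log (2 * k / δ) ≤ mmax)
    (M : ℕ) (hM : (M : ℝ) = 2 * k / ε * mmax) :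
    ENNReal.ofReal (1 - δ) ≤ (Measure.pi fun _ : Fin M => μ)
      {ω | ∑ i ∈ Finset.univ.filter
            (fun i : Fin k =>
              ((Finset.univ.filter fun j : Fin M => ω j ∈ R i).card : ℝ) < mi i),
          (μ (R i)).toReal < ε} := by
  letI : MeasureSpace X := ⟨μ⟩
  haveI : IsProbabilityMeasure (volume : Measure X) := inferInstanceAs (IsProbabilityMeasure μ)
  have hπ : (Measure.pi fun _ : Fin M => μ) = (volume : Measure (Fin M → X)) := rfl
  obtain ⟨hε0, hε1⟩ := hε
  obtain ⟨hδ0, hδ1⟩ := hδ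
  have hk' : (0:ℝ) < k := Nat.cast_pos.mpr hk
  have hk1 : (1:ℝ) ≤ k := Nat.one_le_cast.mpr hk
  have hL : 0 < Real.log (2 * k / δ) := by
    apply Real.log_pos
    rw [lt_div_iff₀ hδ0]
    nlinarith
  have hmmax : 0 < mmax := lt_of_lt_of_le (by positivity) hbig
  have hMpos' : (0:ℝ) < M := by rw [hM]; positivity
  have hMpos : 0 < M := by exact_mod_cast hMpos'
  have hbig' : (k:ℝ) * Real.log (2 * k / δ) ≤ ε * mmax := by
    rw [div_mul_eq_mul_div, div_le_iff₀ hε0] at hbig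
    linarith
  have hMε : (M:ℝ) * ε = 2 * k * mmax := by rw [hM]; field_simp
  set p : Fin k → ℝ := fun i => (μ (R i)).toReal with hpdef
  set S : Fin k → (Fin M → X) → ℝ :=
    fun i ω => ∑ j, (R i).indicator (fun _ => (1:ℝ)) (ω j) with hSdef
  have hcard : ∀ (i : Fin k) (ω : Fin M → X),
      ((Finset.univ.filter fun j : Fin M => ω j ∈ R i).card : ℝ) = S i ω := by
    intro i ω
    rw [Finset.card_filter]
    push_cast
    simp [hSdef, Set.indicator_apply]
  have hSmeas : ∀ i, Measurable (S i) := by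
    intro i
    apply Finset.measurable_sum
    intro j _
    exact (measurable_const.indicator (hmeas i)).comp (measurable_pi_apply j)
  set B : Fin k → Set (Fin M → X) :=
    fun i => if ε / k ≤ p i then {ω | S i ω ≤ mi i} else ∅ with hBdef
  have hmeasB : ∀ i, MeasurableSet (B i) := by
    intro i
    rw [hBdef]; dsimp only
    split_ifs
    · exact measurableSet_le (hSmeas i) measurable_const
    · exact MeasurableSet.empty
  have hBi : ∀ i, (volume : Measure (Fin M → X)) (B i) ≤ ENNReal.ofReal (δ / (2 * k)) := by
    intro i
    rw [hBdef]; dsimp only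
    split_ifs with hpi
    · have hp2 : 2 * mmax ≤ (M:ℝ) * p i := by
        have h1 : (M:ℝ) * (ε / k) ≤ (M:ℝ) * p i :=
          mul_le_mul_of_nonneg_left hpi hMpos'.le
        have h2 : (M:ℝ) * (ε / k) = 2 * mmax := by
          rw [hM]; field_simp
        linarith
      have hm : mi i ≤ (M : ℝ) * ((volume : Measure X) (R i)).toReal := by
        have := hub i
        show mi i ≤ (M:ℝ) * p i
        linarith [hmmax]
      refine (count_tail (R i) (hmeas i) M hMpos (mi i) hm).trans ?_
      apply ENNReal.ofReal_le_ofReal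
      have hsge : mmax ≤ (M:ℝ) * p i - mi i := by
        have := hub i; linarith
      have hexp : -2 * ((M : ℝ) * p i - mi i) ^ 2 / M ≤ Real.log (δ / (2 * k)) := by
        have hlogeq : Real.log (δ / (2 * k)) = -Real.log (2 * k / δ) := by
          rw [← Real.log_inv]
          congr 1
          field_simp
        have hLM : Real.log (2 * k / δ) * M ≤ 2 * mmax ^ 2 := by
          have h1 : (k:ℝ) * Real.log (2 * k / δ) * mmax ≤ ε * mmax * mmax :=
            mul_le_mul_of_nonneg_right hbig' hmmax.le
          have h2 : Real.log (2 * k / δ) * M * ε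
              = 2 * ((k:ℝ) * Real.log (2 * k / δ) * mmax) := by
            calc Real.log (2 * k / δ) * M * ε
                = Real.log (2 * k / δ) * ((M:ℝ) * ε) := by ring
              _ = _ := by rw [hMε]; ring
          have h3 : Real.log (2 * k / δ) * M * ε ≤ 2 * mmax ^ 2 * ε := by
            rw [h2]; nlinarith
          exact le_of_mul_le_mul_right (by linarith) hε0
        rw [hlogeq, div_le_iff₀ hMpos']
        have hsq : mmax ^ 2 ≤ ((M:ℝ) * p i - mi i) ^ 2 := by nlinarith
        nlinarith
      calc Real.exp (-2 * ((M : ℝ) * p i - mi i) ^ 2 / M)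
          ≤ Real.exp (Real.log (δ / (2 * k))) := Real.exp_le_exp.mpr hexp
        _ = δ / (2 * k) := Real.exp_log (by positivity)
    · simp
  have hB : (volume : Measure (Fin M → X)) (⋃ i, B i) ≤ ENNReal.ofReal δ := by
    refine (measure_iUnion_le B).trans ?_
    rw [tsum_fintype]
    calc ∑ i : Fin k, (volume : Measure (Fin M → X)) (B i)
        ≤ ∑ _i : Fin k, ENNReal.ofReal (δ / (2 * k)) :=
          Finset.sum_le_sum fun i _ => hBi i
      _ = (k : ℕ) • ENNReal.ofReal (δ / (2 * k)) := by
          rw [Finset.sum_const, Finset.card_univ, Fintype.card_fin]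
      _ = ENNReal.ofReal ((k : ℝ) * (δ / (2 * k))) := by
          rw [nsmul_eq_mul, ← ENNReal.ofReal_natCast k,
            ← ENNReal.ofReal_mul (by positivity)]
      _ ≤ ENNReal.ofReal δ := by
          apply ENNReal.ofReal_le_ofReal
          rw [mul_div_assoc']
          rw [div_le_iff₀ (by positivity)]
          nlinarith
  have hsubset : (⋃ i, B i)ᶜ ⊆
      {ω : Fin M → X | ∑ i ∈ Finset.univ.filter
            (fun i : Fin k =>
              ((Finset.univ.filter fun j : Fin M => ω j ∈ R i).card : ℝ) < mi i),
          (μ (R i)).toReal < ε} := by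
    intro ω hω
    simp only [Set.mem_compl_iff, Set.mem_iUnion, not_exists] at hω
    simp only [Set.mem_setOf_eq]
    set F := Finset.univ.filter
        (fun i : Fin k =>
          ((Finset.univ.filter fun j : Fin M => ω j ∈ R i).card : ℝ) < mi i) with hF
    have hterm : ∀ i ∈ F, (μ (R i)).toReal < ε / k := by
      intro i hi
      by_contra hcon
      push_neg at hcon
      apply hω i
      rw [hBdef]; dsimp only
      simp only [hpdef]
      rw [if_pos hcon]
      have := (Finset.mem_filter.mp hi).2
      rw [hcard i ω] at this
      exact le_of_lt this
    rcases F.eq_empty_or_nonempty with hFe | hFne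
    · rw [hFe]
      simpa using hε0
    · calc ∑ i ∈ F, (μ (R i)).toReal
          < ∑ _i ∈ F, ε / k := Finset.sum_lt_sum_of_nonempty hFne hterm
        _ = F.card * (ε / k) := by rw [Finset.sum_const, nsmul_eq_mul]
        _ ≤ k * (ε / k) := by
            apply mul_le_mul_of_nonneg_right _ (by positivity)
            have := F.card_le_univ
            simp only [Finset.card_univ, Fintype.card_fin] at this
            exact_mod_cast this
        _ = ε := by field_simp
  rw [hπ]
  calc ENNReal.ofReal (1 - δ)
      = 1 - ENNReal.ofReal δ := by
        rw [ENNReal.ofReal_sub _ hδ0.le, ENNReal.ofReal_one]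
    _ ≤ 1 - (volume : Measure (Fin M → X)) (⋃ i, B i) := tsub_le_tsub_left hB _
    _ = (volume : Measure (Fin M → X)) (⋃ i, B i)ᶜ := by
        rw [prob_compl_eq_one_sub (MeasurableSet.iUnion hmeasB)]
    _ ≤ _ := measure_mono hsubset
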